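/- Let n be odd, k ≥ 1, a ∈ GF(2^{nk}) nonzero, r ∈ GF(2^{2nk})* with r^{2^{nk}+1} = 1 and r^{(2^{nk}+1)/(2^k+1)} ≠ 1. Then the linearized polynomial L_a(z) = z^{2^{(n+1)k}} + r^{2^k} a^{2^k} z^{2^{2k}} + r a z has at most 2^{2k} zeros in GF(2^{2nk}). -/

import Mathlib

theorem stmt15 (n k : ℕ) (hodd : Odd n) (hn : 1 ≤ n) (hk : 1 ≤ k)
    (E : Type*) [Field E] [Fintype E] (hE : Fintype.card E = 2 ^ (2 * n * k))
    (a : E) (haF : a ^ (2 ^ (n * k)) = a) (ha : a ≠ 0)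
    (r : E) (hr0 : r ≠ 0) (hr1 : r ^ (2 ^ (n * k) + 1) = 1)
    (hr2 : r ^ ((2 ^ (n * k) + 1) / (2 ^ k + 1)) ≠ 1) :
    Nat.card {z : E //
        z ^ (2 ^ ((n + 1) * k)) + r ^ (2 ^ k) * a ^ (2 ^ k) * z ^ (2 ^ (2 * k)) +
          r * a * z = 0} ≤ 2 ^ (2 * k) := by
  classical
  -- characteristic 2
  have h2z : (2 : E) = 0 := by
    have h := FiniteField.cast_card_eq_zero E
    rw [hE] at h
    push_cast at h
    have h2nk : 2 * n * k ≠ 0 := by positivity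
    exact pow_eq_zero_iff h2nk |>.mp h
  haveI hchar2 : CharP E 2 := by
    have h1 : ringChar E ∣ 2 := (CharP.cast_eq_zero_iff E (ringChar E) 2).mp h2z
    have h2 : ringChar E = 2 :=
      (Nat.prime_dvd_prime_iff_eq (CharP.char_is_prime E _) Nat.prime_two).mp h1
    exact h2 ▸ ringChar.charP E
  haveI : Fact (Nat.Prime 2) := ⟨Nat.prime_two⟩
  -- dispatch n = 1
  rcases eq_or_lt_of_le hn with h1 | hn2
  · subst h1
    have hle := Nat.card_le_card_of_injective
      (Subtype.val : {z : E //
        z ^ (2 ^ ((1 + 1) * k)) + r ^ (2 ^ k) * a ^ (2 ^ k) * z ^ (2 ^ (2 * k)) +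
          r * a * z = 0} → E) Subtype.coe_injective
    calc Nat.card {z : E //
        z ^ (2 ^ ((1 + 1) * k)) + r ^ (2 ^ k) * a ^ (2 ^ k) * z ^ (2 ^ (2 * k)) +
          r * a * z = 0} ≤ Nat.card E := hle
    _ = 2 ^ (2 * k) := by
        rw [Nat.card_eq_fintype_card, hE]
  -- now 2 ≤ n
  have e1 : (2 : ℕ) ^ ((n + 1) * k) = 2 ^ (n * k) * 2 ^ k := by
    rw [← pow_add]
    congr 1
    ring
  have e2 : (2 : ℕ) ^ (2 * k) = 2 ^ k * 2 ^ k := by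
    rw [← pow_add]
    congr 1
    ring
  rw [e1, e2]
  obtain ⟨q, hqdef⟩ : ∃ q' : ℕ, q' = 2 ^ k := ⟨_, rfl⟩
  obtain ⟨Q, hQdef⟩ : ∃ Q' : ℕ, Q' = 2 ^ (n * k) := ⟨_, rfl⟩
  rw [← hqdef] at hr2 ⊢
  rw [← hQdef] at haF hr1 hr2 ⊢
  obtain ⟨c, hcdef⟩ : ∃ c' : E, c' = r * a := ⟨_, rfl⟩
  rw [← hcdef]
  have hc0 : c ≠ 0 := by rw [hcdef]; exact mul_ne_zero hr0 ha
  -- basic Frobenius facts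
  have frobQ : ∀ x y : E, (x + y) ^ Q = x ^ Q + y ^ Q := fun x y => by
    rw [hQdef]; exact add_pow_char_pow x y 2 (n * k)
  have frobq : ∀ x y : E, (x + y) ^ q = x ^ q + y ^ q := fun x y => by
    rw [hqdef]; exact add_pow_char_pow x y 2 k
  have hQQ : ∀ x : E, x ^ (Q * Q) = x := by
    intro x
    have e : Q * Q = 2 ^ (2 * n * k) := by
      rw [hQdef, ← pow_add]; congr 1; ring
    rw [e, ← hE, FiniteField.pow_card]
  -- arithmetic facts
  have hq2 : 2 ≤ q := by
    rw [hqdef]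
    calc 2 = 2 ^ 1 := (pow_one 2).symm
    _ ≤ 2 ^ k := Nat.pow_le_pow_right (by norm_num) hk
  have hqqQ : q * q ≤ Q := by
    have hkk : k + k ≤ n * k := by nlinarith
    rw [hqdef, hQdef]
    calc 2 ^ k * 2 ^ k = 2 ^ (k + k) := by rw [pow_add]
    _ ≤ 2 ^ (n * k) := Nat.pow_le_pow_right (by norm_num) hkk
  have hqQ : q ≤ Q := le_trans (Nat.le_mul_of_pos_left q (by omega)) hqqQ
  obtain ⟨m, hm⟩ : ∃ m, q * q + 1 + m = Q + 1 := ⟨Q - q * q, by omega⟩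
  obtain ⟨l, hl⟩ : ∃ l, q + 1 + l = Q + 1 := ⟨Q - q, by omega⟩
  -- divisibility : (q+1) ∣ (Q+1) and (q+1) ∣ l
  have hQq : Q = q ^ n := by rw [hQdef, hqdef, ← pow_mul, Nat.mul_comm]
  have hmod1 : ((q : ℤ)) ≡ -1 [ZMOD ((q : ℤ) + 1)] := by
    rw [Int.modEq_iff_dvd]
    exact ⟨-1, by ring⟩
  have hmodn : ((q : ℤ)) ^ n ≡ -1 [ZMOD ((q : ℤ) + 1)] := by
    calc ((q : ℤ)) ^ n ≡ (-1) ^ n [ZMOD ((q : ℤ) + 1)] := hmod1.pow n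
    _ = -1 := hodd.neg_one_pow
  have hdvd1 : (q + 1) ∣ (Q + 1) := by
    have h2 : ((q : ℤ) + 1) ∣ ((q : ℤ) ^ n + 1) := by
      have hd := hmodn.dvd
      have h3 : ((q : ℤ) ^ n + 1) = -(-1 - (q : ℤ) ^ n) := by ring
      rw [h3]
      exact dvd_neg.mpr hd
    have h4 : ((q : ℤ) + 1) ∣ ((Q : ℤ) + 1) := by
      rw [hQq]; push_cast; exact h2
    exact_mod_cast h4
  have hdvdl : (q + 1) ∣ l := by
    have h2 : ((q : ℤ) + 1) ∣ ((q : ℤ) ^ n - q) := by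
      have hd := (hmodn.trans hmod1.symm).dvd
      have h3 : ((q : ℤ) ^ n - q) = -((q : ℤ) - (q : ℤ) ^ n) := by ring
      rw [h3]
      exact dvd_neg.mpr hd
    have h4 : ((q : ℤ) + 1) ∣ (l : ℤ) := by
      have h5 : (l : ℤ) = (Q : ℤ) - q := by
        have := hl
        omega
      rw [h5, hQq]
      push_cast
      exact h2
    exact_mod_cast h4
  -- helper pow facts
  have hpowA : ∀ x : E, (x ^ (Q * q)) ^ Q = x ^ q := by
    intro x
    rw [← pow_mul, show Q * q * Q = Q * Q * q by ring, pow_mul, hQQ]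
  have hpowB : ∀ x : E, (x ^ (q * q)) ^ Q = (x ^ (Q * q)) ^ q := by
    intro x
    rw [← pow_mul, ← pow_mul, show q * q * Q = Q * q * q by ring]
  have hnormQ : ∀ x : E, (x ^ (Q + 1)) ^ Q = x ^ (Q + 1) := by
    intro x
    rw [← pow_mul, show (Q + 1) * Q = Q * Q + Q by ring, pow_add, hQQ]
    exact (pow_succ' x Q).symm
  -- key claim
  have hkey : ∀ z1 z2 : E,
      z1 ^ (Q * q) + r ^ q * a ^ q * z1 ^ (q * q) + c * z1 = 0 →
      z2 ^ (Q * q) + r ^ q * a ^ q * z2 ^ (q * q) + c * z2 = 0 →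
      z1 ^ (q * q) * z2 = z2 ^ (q * q) * z1 := by
    intro z1 z2 hP1 hP2
    have hba : r ^ q * a ^ q = c ^ q := by rw [hcdef, mul_pow]
    have hz1 : z1 ^ (Q * q) = c ^ q * z1 ^ (q * q) + c * z1 := by
      linear_combination hP1 - z1 ^ (q * q) * hba - (c ^ q * z1 ^ (q * q) + c * z1) * h2z
    have hz2 : z2 ^ (Q * q) = c ^ q * z2 ^ (q * q) + c * z2 := by
      linear_combination hP2 - z2 ^ (q * q) * hba - (c ^ q * z2 ^ (q * q) + c * z2) * h2z
    by_contra hne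
    have hB : z1 ^ (q * q) * z2 + z2 ^ (q * q) * z1 ≠ 0 := by
      intro h
      apply hne
      have h' := eq_neg_of_add_eq_zero_left h
      rwa [CharTwo.neg_eq] at h'
    obtain ⟨B, hBdef⟩ : ∃ B' : E, B' = z1 ^ (q * q) * z2 + z2 ^ (q * q) * z1 := ⟨_, rfl⟩
    rw [← hBdef] at hB
    have hA : z1 ^ (Q * q) * z2 + z2 ^ (Q * q) * z1 = c ^ q * B := by
      rw [hBdef]
      linear_combination z2 * hz1 + z1 * hz2 + c * z1 * z2 * h2z
    have hC : z1 ^ (Q * q) * z2 ^ (q * q) + z2 ^ (Q * q) * z1 ^ (q * q) = c * B := by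
      rw [hBdef]
      linear_combination z2 ^ (q * q) * hz1 + z1 ^ (q * q) * hz2 +
        c ^ q * z1 ^ (q * q) * z2 ^ (q * q) * h2z
    have hCQ : (z1 ^ (Q * q) * z2 ^ (q * q) + z2 ^ (Q * q) * z1 ^ (q * q)) ^ Q =
        (z1 ^ (Q * q) * z2 + z2 ^ (Q * q) * z1) ^ q := by
      rw [frobQ, frobq]
      simp only [mul_pow, hpowA, hpowB]
      ring
    have hmain : c ^ (q * q + 1 + m) * B ^ (q + 1 + l) = c ^ (q * q + 1) * B ^ (q + 1) := by
      rw [hm, hl]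
      have h1 : (c * B) ^ (Q + 1) = (c ^ q * B) ^ q * (c * B) := by
        calc (c * B) ^ (Q + 1) = (c * B) ^ Q * (c * B) := by rw [pow_succ]
        _ = (z1 ^ (Q * q) * z2 ^ (q * q) + z2 ^ (Q * q) * z1 ^ (q * q)) ^ Q * (c * B) := by
            rw [hC]
        _ = (z1 ^ (Q * q) * z2 + z2 ^ (Q * q) * z1) ^ q * (c * B) := by rw [hCQ]
        _ = (c ^ q * B) ^ q * (c * B) := by rw [hA]
      calc c ^ (Q + 1) * B ^ (Q + 1) = (c * B) ^ (Q + 1) := (mul_pow c B (Q + 1)).symm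
      _ = (c ^ q * B) ^ q * (c * B) := h1
      _ = c ^ (q * q + 1) * B ^ (q + 1) := by ring
    have hcb : c ^ m * B ^ l = 1 := by
      have hfac : c ^ (q * q + 1) * B ^ (q + 1) ≠ 0 :=
        mul_ne_zero (pow_ne_zero _ hc0) (pow_ne_zero _ hB)
      apply mul_left_cancel₀ hfac
      rw [mul_one]
      rw [pow_add, pow_add] at hmain
      linear_combination hmain
    obtain ⟨N, hNdef⟩ : ∃ N' : ℕ, N' = (Q + 1) / (q + 1) := ⟨_, rfl⟩
    rw [← hNdef] at hr2
    have hN : N * (q + 1) = Q + 1 := by rw [hNdef]; exact Nat.div_mul_cancel hdvd1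
    obtain ⟨J, hJ⟩ := hdvdl
    obtain ⟨s, hs⟩ : ∃ s, q = s + 1 := ⟨q - 1, by omega⟩
    have h3 : c ^ (m * N) * B ^ (l * N) = 1 := by
      have h := congrArg (· ^ N) hcb
      simpa [mul_pow, ← pow_mul] using h
    have hBl : B ^ (l * N) = (B ^ (Q + 1)) ^ J := by
      rw [← pow_mul]
      congr 1
      rw [hJ, ← hN]
      ring
    have hcm : c ^ (m * N) = r ^ (m * N) * a ^ (m * N) := by rw [hcdef, mul_pow]
    have hexp : m * N + N * 2 + (Q + 1) * s = (Q + 1) * N := by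
      have h5 : m + 2 + s * (q + 1) = Q + 1 := by rw [← hm, hs]; ring
      calc m * N + N * 2 + (Q + 1) * s = (m + 2 + s * (q + 1)) * N := by rw [← hN]; ring
      _ = (Q + 1) * N := by rw [h5]
    have hrm : r ^ (m * N) * (r ^ N) ^ 2 = 1 := by
      have h6 : r ^ (m * N) * (r ^ N) ^ 2 * (r ^ (Q + 1)) ^ s = r ^ ((Q + 1) * N) := by
        rw [← pow_mul, ← pow_mul, ← pow_add, ← pow_add, hexp]
      rw [hr1, one_pow, mul_one] at h6
      rw [h6, pow_mul, hr1, one_pow]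
    have hgam : a ^ (m * N) * (B ^ (Q + 1)) ^ J = (r ^ N) ^ 2 := by
      apply mul_left_cancel₀ (pow_ne_zero (m * N) hr0)
      rw [hrm, ← hBl]
      calc r ^ (m * N) * (a ^ (m * N) * B ^ (l * N)) = c ^ (m * N) * B ^ (l * N) := by
            rw [hcm]; ring
      _ = 1 := h3
    obtain ⟨γ, hgdef⟩ : ∃ g : E, g = a ^ (m * N) * (B ^ (Q + 1)) ^ J := ⟨_, rfl⟩
    rw [← hgdef] at hgam
    have hγQ : γ ^ Q = γ := by
      have h8 : (a ^ (m * N)) ^ Q = a ^ (m * N) := by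
        rw [← pow_mul, mul_comm (m * N) Q, pow_mul, haF]
      have h9 : ((B ^ (Q + 1)) ^ J) ^ Q = (B ^ (Q + 1)) ^ J := by
        rw [← pow_mul, mul_comm J Q, pow_mul, hnormQ]
      rw [hgdef, mul_pow, h8, h9]
    have h10 : γ ^ (Q + 1) = γ * γ := by rw [pow_succ, hγQ]
    have h11 : γ ^ (Q + 1) = 1 := by
      rw [hgam, ← pow_mul, ← pow_mul, show N * (2 * (Q + 1)) = (Q + 1) * (N * 2) by ring,
        pow_mul, hr1, one_pow]
    have hγ1 : γ * γ = 1 := by rw [← h10, h11]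
    have hγeq1 : γ = 1 := by
      rcases mul_self_eq_one_iff.mp hγ1 with h | h
      · exact h
      · rw [h]; exact CharTwo.neg_eq 1
    have hρ : r ^ N * r ^ N = 1 := by
      have h12 := hgam
      rw [hγeq1] at h12
      calc r ^ N * r ^ N = (r ^ N) ^ 2 := (sq (r ^ N)).symm
      _ = 1 := h12.symm
    have hρ1 : r ^ N = 1 := by
      rcases mul_self_eq_one_iff.mp hρ with h | h
      · exact h
      · rw [h]; exact CharTwo.neg_eq 1
    exact hr2 hρ1
  -- counting
  by_cases hex : ∃ z0 : E, (z0 ^ (Q * q) + r ^ q * a ^ q * z0 ^ (q * q) + c * z0 = 0) ∧ z0 ≠ 0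
  · obtain ⟨z0, hP0, h00⟩ := hex
    have hmem : ∀ z : E, z ^ (Q * q) + r ^ q * a ^ q * z ^ (q * q) + c * z = 0 →
        (z * z0⁻¹) ^ (q * q) = z * z0⁻¹ := by
      intro z hz
      have hk0 := hkey z z0 hz hP0
      have hz0q : z0 ^ (q * q) ≠ 0 := pow_ne_zero _ h00
      rw [mul_pow, inv_pow, ← div_eq_mul_inv, ← div_eq_mul_inv, div_eq_div_iff hz0q h00]
      linear_combination hk0
    have hinj : Function.Injective
        (fun z : {z : E // z ^ (Q * q) + r ^ q * a ^ q * z ^ (q * q) + c * z = 0} =>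
          (⟨z.1 * z0⁻¹, hmem z.1 z.2⟩ : {w : E // w ^ (q * q) = w})) := by
      intro x y hxy
      apply Subtype.ext
      have h := congrArg Subtype.val hxy
      simp only at h
      exact mul_right_cancel₀ (inv_ne_zero h00) h
    have h1 := Nat.card_le_card_of_injective _ hinj
    refine le_trans h1 ?_
    set p : Polynomial E := Polynomial.X ^ (q * q) - Polynomial.X with hpdef
    have h1lt : 1 < q * q := by nlinarith
    have hp0 : p ≠ 0 := FiniteField.X_pow_card_sub_X_ne_zero E h1lt
    have hsub : {w : E | w ^ (q * q) = w} ⊆ (p.roots.toFinset : Set E) := by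
      intro w hw
      simp only [Set.mem_setOf_eq] at hw
      simp only [Finset.mem_coe, Multiset.mem_toFinset]
      rw [Polynomial.mem_roots hp0]
      simp [Polynomial.IsRoot, hpdef, sub_eq_zero, hw]
    calc Nat.card {w : E // w ^ (q * q) = w} = {w : E | w ^ (q * q) = w}.ncard :=
          Nat.card_coe_set_eq _
    _ ≤ (p.roots.toFinset : Set E).ncard := Set.ncard_le_ncard hsub (Set.toFinite _)
    _ = p.roots.toFinset.card := Set.ncard_coe_finset _
    _ ≤ Multiset.card p.roots := Multiset.toFinset_card_le _
    _ ≤ p.natDegree := p.card_roots'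
    _ = q * q := FiniteField.X_pow_card_sub_X_natDegree_eq E h1lt
  · push_neg at hex
    haveI hss : Subsingleton
        {z : E // z ^ (Q * q) + r ^ q * a ^ q * z ^ (q * q) + c * z = 0} := by
      constructor
      rintro ⟨x, hx⟩ ⟨y, hy⟩
      apply Subtype.ext
      show x = y
      rw [hex x hx, hex y hy]
    have h1 : Nat.card
        {z : E // z ^ (Q * q) + r ^ q * a ^ q * z ^ (q * q) + c * z = 0} ≤ 1 :=
      Finite.card_le_one_iff_subsingleton.mpr hss
    have h2 : 1 ≤ q * q := by nlinarith
    omega
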